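/- arXiv:1302.4995 — 5 statements merged into one kernel-verified Lean document; each statement's English description precedes it below -/
import Mathlib

section
/- Let Ω′₁ = (x²z − y³) dx + xy² dy − x³ dz and φ(x,y,z) = (x³, x²y, x²z + y³/3). Then φ*Ω′₁ ∧ (z dx − x dz) = 0 as a polynomial 2-form; in other words the foliation defined by Ω′₁ is the pullback under a cubic map of the degree-0 foliation z dx − x dz. -/
/-- With Ω′₁ = (x²z − y³) dx + xy² dy − x³ dz and φ(x,y,z) = (x³, x²y, x²z + y³/3),
one has φ*Ω′₁ ∧ (z dx − x dz) = 0: the foliation defined by Ω′₁ is the pullback under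
a cubic map of the degree-0 foliation z dx − x dz. -/
theorem pullback_Omega1_cubic_wedge (x y z : ℂ) :
    -- φ = (f,g,h) with df = 3x² dx, dg = 2xy dx + x² dy, dh = 2xz dx + y² dy + x² dz
    let f := x ^ 3
    let g := x ^ 2 * y
    let h := x ^ 2 * z + y ^ 3 / 3
    let A := f ^ 2 * h - g ^ 3
    let B := f * g ^ 2
    let C := -f ^ 3
    let ηx := A * (3 * x ^ 2) + B * (2 * x * y) + C * (2 * x * z)
    let ηy := B * x ^ 2 + C * y ^ 2
    let ηz := C * x ^ 2
    -- coefficients of z dx − x dz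
    let ωx := z
    let ωy := (0 : ℂ)
    let ωz := -x
    ηx * ωy - ηy * ωx = 0 ∧ ηx * ωz - ηz * ωx = 0 ∧ ηy * ωz - ηz * ωy = 0 := by
  exact ⟨by ring, by ring, by ring⟩
end

section
/- Let Ω′₂ = (x²z − xyz − y³) dx + x(xz + y²) dy − x³ dz and ψ₂(x,y,z) = (x², xy, xz − 2x² − 2xy − y²). Then ψ₂*Ω′₂ ∧ ((xz − yz) dx + xz dy − x² dz) = 0 as a polynomial 2-form. -/
/-- With Ω′₂ = (x²z − xyz − y³) dx + x(xz + y²) dy − x³ dz and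
ψ₂(x,y,z) = (x², xy, xz − 2x² − 2xy − y²), one has
ψ₂*Ω′₂ ∧ ((xz − yz) dx + xz dy − x² dz) = 0. -/
theorem pullback_Omega2_wedge (x y z : ℂ) :
    -- ψ₂ = (f,g,h); df = 2x dx, dg = y dx + x dy,
    -- dh = (z − 4x − 2y) dx + (−2x − 2y) dy + x dz
    let f := x ^ 2
    let g := x * y
    let h := x * z - 2 * x ^ 2 - 2 * x * y - y ^ 2
    let A := f ^ 2 * h - f * g * h - g ^ 3
    let B := f * (f * h + g ^ 2)
    let C := -f ^ 3
    let ηx := A * (2 * x) + B * y + C * (z - 4 * x - 2 * y)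
    let ηy := B * x + C * (-2 * x - 2 * y)
    let ηz := C * x
    let ωx := x * z - y * z
    let ωy := x * z
    let ωz := -(x ^ 2)
    ηx * ωy - ηy * ωx = 0 ∧ ηx * ωz - ηz * ωx = 0 ∧ ηy * ωz - ηz * ωy = 0 := by
  refine ⟨by ring, by ring, by ring⟩
end

section
/- Let Ω′₃ = y(xz − x² − y²) dx + x(x² + y²) dy − x²y dz and ψ₃(x,y,z) = (x², xy, xz + y²/2). Then ψ₃*Ω′₃ ∧ (y(z − x) dx + x² dy − xy dz) = 0 as a polynomial 2-form. -/
/-- With Ω′₃ = y(xz − x² − y²) dx + x(x² + y²) dy − x²y dz and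
ψ₃(x,y,z) = (x², xy, xz + y²/2), one has
ψ₃*Ω′₃ ∧ (y(z − x) dx + x² dy − xy dz) = 0. -/
theorem pullback_Omega3_wedge (x y z : ℂ) :
    -- ψ₃ = (f,g,h); df = 2x dx, dg = y dx + x dy, dh = z dx + y dy + x dz
    let f := x ^ 2
    let g := x * y
    let h := x * z + y ^ 2 / 2
    let A := g * (f * h - f ^ 2 - g ^ 2)
    let B := f * (f ^ 2 + g ^ 2)
    let C := -(f ^ 2 * g)
    let ηx := A * (2 * x) + B * y + C * z
    let ηy := B * x + C * y
    let ηz := C * x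
    let ωx := y * (z - x)
    let ωy := x ^ 2
    let ωz := -(x * y)
    ηx * ωy - ηy * ωx = 0 ∧ ηx * ωz - ηz * ωx = 0 ∧ ηy * ωz - ηz * ωy = 0 := by
  refine ⟨by ring, by ring, by ring⟩
end

section
/- The function F(x,y) = (2 + 1/x + 2y/x + y²/x²)·exp(−y/x) is a first integral of the foliation defined by Ω₂ = x² dx + (x + y²)(x dy − y dx) on the open set {x ≠ 0} ⊂ C²: the 1-form dF is proportional to Ω₂, i.e. (∂F/∂x)·(coefficient of dy in Ω₂) − (∂F/∂y)·(coefficient of dx in Ω₂) = 0 wherever x ≠ 0. -/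
/-- F(x,y) = (2 + 1/x + 2y/x + y²/x²)·exp(−y/x) is a first integral of the
foliation defined by Ω₂ = (x² − y(x + y²)) dx + x(x + y²) dy on {x ≠ 0} ⊂ ℂ²:
F_x · Q − F_y · P = 0 wherever x ≠ 0. -/
theorem firstIntegral_Omega2 (x y : ℂ) (hx : x ≠ 0) :
    let F : ℂ → ℂ → ℂ := fun x y =>
      (2 + 1 / x + 2 * y / x + y ^ 2 / x ^ 2) * Complex.exp (-y / x)
    let P := x ^ 2 - y * (x + y ^ 2)
    let Q := x * (x + y ^ 2)
    deriv (fun x' => F x' y) x * Q - deriv (fun y' => F x y') y * P = 0 := by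
  intro F P Q
  have hx2 : x ^ 2 ≠ 0 := pow_ne_zero _ hx
  -- derivative in x
  have hu : HasDerivAt (fun x' : ℂ => 2 + 1 / x' + 2 * y / x' + y ^ 2 / x' ^ 2)
      (0 - 1 / x ^ 2 - 2 * y / x ^ 2 - y ^ 2 * (2 * x) / (x ^ 2) ^ 2) x := by
    have h1 : HasDerivAt (fun x' : ℂ => 1 / x')
        ((0 * x - 1 * 1) / x ^ 2) x :=
      (hasDerivAt_const x (1:ℂ)).div (hasDerivAt_id x) hx
    have h2 : HasDerivAt (fun x' : ℂ => 2 * y / x')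
        ((0 * x - 2 * y * 1) / x ^ 2) x :=
      (hasDerivAt_const x (2*y)).div (hasDerivAt_id x) hx
    have h3 : HasDerivAt (fun x' : ℂ => y ^ 2 / x' ^ 2)
        ((0 * x ^ 2 - y ^ 2 * ((2:ℕ) * x ^ (2-1))) / (x ^ 2) ^ 2) x :=
      (hasDerivAt_const x (y^2)).div (hasDerivAt_pow 2 x) hx2
    have := (((hasDerivAt_const x (2:ℂ)).add h1).add h2).add h3
    refine HasDerivAt.congr_deriv this ?_
    push_cast
    ring
  have he : HasDerivAt (fun x' : ℂ => Complex.exp (-y / x'))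
      (Complex.exp (-y / x) * (y / x ^ 2)) x := by
    have h0 : HasDerivAt (fun x' : ℂ => -y / x') ((0 * x - -y * 1) / x ^ 2) x :=
      (hasDerivAt_const x (-y)).div (hasDerivAt_id x) hx
    have := h0.cexp
    refine HasDerivAt.congr_deriv this ?_
    ring
  have hF : HasDerivAt (fun x' => F x' y)
      ((0 - 1 / x ^ 2 - 2 * y / x ^ 2 - y ^ 2 * (2 * x) / (x ^ 2) ^ 2) * Complex.exp (-y / x)
        + (2 + 1 / x + 2 * y / x + y ^ 2 / x ^ 2) * (Complex.exp (-y / x) * (y / x ^ 2))) x :=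
    hu.mul he
  -- derivative in y
  have hu' : HasDerivAt (fun y' : ℂ => 2 + 1 / x + 2 * y' / x + y' ^ 2 / x ^ 2)
      (2 / x + 2 * y / x ^ 2) y := by
    have h1 : HasDerivAt (fun y' : ℂ => 2 * y' / x) (2 * 1 / x) y :=
      ((hasDerivAt_id y).const_mul 2).div_const x
    have h2 : HasDerivAt (fun y' : ℂ => y' ^ 2 / x ^ 2)
        (((2:ℕ) * y ^ (2-1)) / x ^ 2) y :=
      (hasDerivAt_pow 2 y).div_const (x ^ 2)
    have := ((hasDerivAt_const y ((2:ℂ) + 1 / x)).add h1).add h2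
    refine HasDerivAt.congr_deriv this ?_
    push_cast; ring
  have he' : HasDerivAt (fun y' : ℂ => Complex.exp (-y' / x))
      (Complex.exp (-y / x) * (-1 / x)) y := by
    have h0 : HasDerivAt (fun y' : ℂ => -y' / x) (-1 / x) y :=
      (hasDerivAt_id y).neg.div_const x
    exact h0.cexp
  have hF' : HasDerivAt (fun y' => F x y')
      ((2 / x + 2 * y / x ^ 2) * Complex.exp (-y / x)
        + (2 + 1 / x + 2 * y / x + y ^ 2 / x ^ 2) * (Complex.exp (-y / x) * (-1 / x))) y :=
    hu'.mul he'
  rw [hF.deriv, hF'.deriv]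
  simp only [P, Q]
  field_simp
  ring
end

section
/- Let ω = q₁ yz (dy/y − dz/z) + q₂ xz (dz/z − dx/x) + q₃ xy (dx/x − dy/y) with q₁ = a₀x² + a₁y² + a₂z² + a₃xy + a₄xz + a₅yz, q₂ and q₃ analogous with coefficients bᵢ and cᵢ. Then the pullback σ*ω under σ(x,y,z) = (yz, xz, xy) is divisible (coefficient-wise) by x²yz if and only if a₁ = a₂ = b₀ = b₂ = b₄ = c₀ = c₁ = c₃ = 0 and b₃ = c₄. -/
open MvPolynomial

set_option maxHeartbeats 1000000

/-- Let ω = (y q₃ − z q₂) dx + (z q₁ − x q₃) dy + (x q₂ − y q₁) dz with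
q₁ = a₀x² + a₁y² + a₂z² + a₃xy + a₄xz + a₅yz (and analogously q₂, q₃ with bᵢ, cᵢ).
The pullback σ*ω under σ(x,y,z) = (yz, xz, xy) is divisible coefficient-wise by
x²yz iff a₁ = a₂ = b₀ = b₂ = b₄ = c₀ = c₁ = c₃ = 0 and b₃ = c₄. -/
theorem sigma_pullback_divisible_iff
    (a0 a1 a2 a3 a4 a5 b0 b1 b2 b3 b4 b5 c0 c1 c2 c3 c4 c5 : ℂ) :
    let x : MvPolynomial (Fin 3) ℂ := X 0
    let y : MvPolynomial (Fin 3) ℂ := X 1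
    let z : MvPolynomial (Fin 3) ℂ := X 2
    let q1 : MvPolynomial (Fin 3) ℂ → MvPolynomial (Fin 3) ℂ → MvPolynomial (Fin 3) ℂ →
        MvPolynomial (Fin 3) ℂ := fun u v w =>
      C a0 * u ^ 2 + C a1 * v ^ 2 + C a2 * w ^ 2 + C a3 * u * v + C a4 * u * w + C a5 * v * w
    let q2 : MvPolynomial (Fin 3) ℂ → MvPolynomial (Fin 3) ℂ → MvPolynomial (Fin 3) ℂ →
        MvPolynomial (Fin 3) ℂ := fun u v w =>
      C b0 * u ^ 2 + C b1 * v ^ 2 + C b2 * w ^ 2 + C b3 * u * v + C b4 * u * w + C b5 * v * w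
    let q3 : MvPolynomial (Fin 3) ℂ → MvPolynomial (Fin 3) ℂ → MvPolynomial (Fin 3) ℂ →
        MvPolynomial (Fin 3) ℂ := fun u v w =>
      C c0 * u ^ 2 + C c1 * v ^ 2 + C c2 * w ^ 2 + C c3 * u * v + C c4 * u * w + C c5 * v * w
    -- coefficient functions of ω
    let ωx := fun u v w => v * q3 u v w - w * q2 u v w
    let ωy := fun u v w => w * q1 u v w - u * q3 u v w
    let ωz := fun u v w => u * q2 u v w - v * q1 u v w
    -- coefficients of σ*ω, using d(yz) = z dy + y dz, d(xz) = z dx + x dz, d(xy) = y dx + x dy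
    let px := ωy (y*z) (x*z) (x*y) * z + ωz (y*z) (x*z) (x*y) * y
    let py := ωx (y*z) (x*z) (x*y) * z + ωz (y*z) (x*z) (x*y) * x
    let pz := ωx (y*z) (x*z) (x*y) * y + ωy (y*z) (x*z) (x*y) * x
    (x ^ 2 * y * z ∣ px ∧ x ^ 2 * y * z ∣ py ∧ x ^ 2 * y * z ∣ pz) ↔
      (a1 = 0 ∧ a2 = 0 ∧ b0 = 0 ∧ b2 = 0 ∧ b4 = 0 ∧ c0 = 0 ∧ c1 = 0 ∧ c3 = 0 ∧ b3 = c4) := by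
  intro x y z q1 q2 q3 ωx ωy ωz px py pz
  simp only [px, py, pz, ωx, ωy, ωz, q1, q2, q3, x, y, z]
  constructor
  · rintro ⟨⟨f, hf⟩, ⟨g, hg⟩, ⟨k, hk⟩⟩
    have v1 := congrArg (eval ![(0:ℂ),1,1]) hf
    have v2 := congrArg (eval ![(0:ℂ),1,2]) hf
    have df := congrArg (pderiv 0) hf
    have u1 := congrArg (eval ![(0:ℂ),1,1]) df
    have u2 := congrArg (eval ![(0:ℂ),1,-1]) df
    have u3 := congrArg (eval ![(0:ℂ),1,2]) df
    have w1 := congrArg (eval ![(1:ℂ),0,1]) hg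
    have w2 := congrArg (eval ![(2:ℂ),0,1]) hg
    have s1 := congrArg (eval ![(1:ℂ),1,0]) hk
    have s2 := congrArg (eval ![(2:ℂ),1,0]) hk
    simp [pderiv_mul, pderiv_X] at v1 v2 u1 u2 u3 w1 w2 s1 s2
    refine ⟨?_, ?_, ?_, ?_, ?_, ?_, ?_, ?_, ?_⟩
    · linear_combination w1 - (1/8) * w2
    · linear_combination (1/8) * s2 - s1
    · linear_combination 2*v1 - (1/8)*v2
    · linear_combination (1/8)*s2 - 2*s1
    · linear_combination u1 + (1/3)*u2 - (1/12)*u3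
    · linear_combination v1 - (1/8)*v2
    · linear_combination 2*w1 - (1/8)*w2
    · linear_combination (1/2)*u1 - (1/6)*u2 - (1/12)*u3
    · linear_combination (1/2)*u1 - (1/2)*u2
  · rintro ⟨rfl, rfl, rfl, rfl, rfl, rfl, rfl, rfl, rfl⟩
    refine ⟨⟨(C b1 - C c5) * X 1 * X 2 ^ 2 + (C b5 - C c2) * X 1 ^ 2 * X 2, ?_⟩,
        ⟨(C b3 - C a0) * X 1 * X 2 ^ 2 + (C c5 - C a3) * X 0 * X 2 ^ 2 +
          (C c2 - C a4) * X 0 * X 1 * X 2 - C a5 * X 0 ^ 2 * X 2, ?_⟩,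
        ⟨(C a0 - C b3) * X 1 ^ 2 * X 2 + (C a3 - C b1) * X 0 * X 1 * X 2 +
          (C a4 - C b5) * X 0 * X 1 ^ 2 + C a5 * X 0 ^ 2 * X 1, ?_⟩⟩ <;>
      · simp only [map_zero]
        ring
end
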